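/- For all positive integers q, z, m, t with z < q and t ≤ m, there exists a C(m,t)·z^t-regular PDA with parameters (C(m,t)·q^t, z^t·C(q,z)^m, z^t·C(q,z)^m·(1 − ((q−z)/q)^t), (q−z)^t·C(q,z)^m). -/

import Mathlib

open Finset

/-- A (K,F,Z,S) placement delivery array: an F×K array over {*} ∪ [1:S],
    with `none` playing the role of `*`. Columns are indexed by `κ`. -/
def IsPDA {F S : ℕ} {κ : Type} [Fintype κ]
    (Z : ℕ) (P : Fin F → κ → Option (Fin S)) : Prop :=
  -- C1: each column contains exactly Z stars
  (∀ k : κ, (Finset.univ.filter (fun j : Fin F => P j k = none)).card = Z) ∧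
  -- C2: every integer occurs at least once
  (∀ s : Fin S, ∃ j k, P j k = some s) ∧
  -- C3: the 2×2 star-crossing condition
  (∀ j₁ j₂ : Fin F, ∀ k₁ k₂ : κ, ∀ s : Fin S,
    (j₁, k₁) ≠ (j₂, k₂) → P j₁ k₁ = some s → P j₂ k₂ = some s →
    P j₁ k₂ = none ∧ P j₂ k₁ = none)

/-- `P` is `g`-regular: every integer appears exactly `g` times. -/
def PDARegular {F S : ℕ} {κ : Type} [Fintype κ]
    (g : ℕ) (P : Fin F → κ → Option (Fin S)) : Prop :=
  ∀ s : Fin S, (Finset.univ.filter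
    (fun jk : Fin F × κ => P jk.1 jk.2 = some s)).card = g

/-- A base PDA with parameter `lam`: a PDA with `lam ∣ F`, `lam ∣ Z`,
    star pattern row-periodic with period `F/lam` (C4), and a star-row
    assignment `φ` into the first `F/lam` rows with all fibers of size
    `lam*S/F` (C5, stated multiplicatively: `card * F = lam * S`). -/
def IsBasePDA {F S : ℕ} {κ : Type} [Fintype κ]
    (Z lam : ℕ) (P : Fin F → κ → Option (Fin S)) : Prop :=
  IsPDA Z P ∧ 0 < lam ∧ lam ∣ F ∧ lam ∣ Z ∧
  (∀ j₁ j₂ : Fin F, ∀ k : κ, j₁.val % (F / lam) = j₂.val % (F / lam) →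
    (P j₁ k = none ↔ P j₂ k = none)) ∧
  (∃ φ : Fin S → Fin F, (∀ s, (φ s).val < F / lam) ∧
    (∀ s : Fin S, ∀ j : Fin F, ∀ k : κ, P j k = some s → P (φ s) k = none) ∧
    (∀ r : Fin F, r.val < F / lam →
      (Finset.univ.filter (fun s : Fin S => φ s = r)).card * F = lam * S))

namespace SchemeA

variable {q z m t : ℕ}

/-- helper: the `a`-th element of a finset of known card. -/
def elt (A : Finset (Fin q)) {k : ℕ} (h : A.card = k) (a : Fin k) : Fin q :=
  (A.orderIsoOfFin h a : Fin q)

lemma elt_mem (A : Finset (Fin q)) {k : ℕ} (h : A.card = k) (a : Fin k) :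
    elt A h a ∈ A := (A.orderIsoOfFin h a).2

/-- helper: the rank of an element in a finset of known card. -/
def pos (A : Finset (Fin q)) {k : ℕ} (h : A.card = k) (x : Fin q) (hx : x ∈ A) : Fin k :=
  (A.orderIsoOfFin h).symm ⟨x, hx⟩

lemma pos_elt (A : Finset (Fin q)) {k : ℕ} (h : A.card = k) (a : Fin k)
    (ha : elt A h a ∈ A) : pos A h (elt A h a) ha = a := by
  have : (⟨elt A h a, ha⟩ : {x // x ∈ A}) = A.orderIsoOfFin h a := Subtype.ext rfl
  rw [pos, this, OrderIso.symm_apply_apply]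

lemma elt_pos (A : Finset (Fin q)) {k : ℕ} (h : A.card = k) (x : Fin q) (hx : x ∈ A) :
    elt A h (pos A h x hx) = x := by
  rw [elt, pos, OrderIso.apply_symm_apply]

lemma pos_congr {A A' : Finset (Fin q)} {k : ℕ} {h : A.card = k} {h' : A'.card = k}
    {x x' : Fin q} {hx : x ∈ A} {hx' : x' ∈ A'} (hA : A = A') (hxx : x = x') :
    pos A h x hx = pos A' h' x' hx' := by subst hA; subst hxx; rfl

lemma card_swap {A : Finset (Fin q)} {x y : Fin q} (hx : x ∈ A) (hy : y ∉ A) :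
    (insert y (A.erase x)).card = A.card := by
  rw [Finset.card_insert_of_notMem (fun h => hy (Finset.mem_of_mem_erase h)),
    Finset.card_erase_of_mem hx]
  have := Finset.card_pos.2 ⟨x, hx⟩
  omega

lemma swap_swap {A : Finset (Fin q)} {x y : Fin q} (hx : x ∈ A) (hy : y ∉ A) :
    insert x ((insert y (A.erase x)).erase y) = A := by
  rw [Finset.erase_insert (fun h => hy (Finset.mem_of_mem_erase h)), Finset.insert_erase hx]

abbrev Sz (q z : ℕ) := {A : Finset (Fin q) // A.card = z}
abbrev Tt (m t : ℕ) := {T : Finset (Fin m) // T.card = t}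
abbrev Row (q z m t : ℕ) := (Fin m → Sz q z) × (Fin t → Fin z)
abbrev Col (q m t : ℕ) := Tt m t × (Fin t → Fin q)
abbrev Sym (q z m t : ℕ) := (Fin m → Sz q z) × (Fin t → Fin (q - z))

lemma compl_card (A : Sz q z) : (A.1ᶜ : Finset (Fin q)).card = q - z := by
  rw [Finset.card_compl, A.2, Fintype.card_fin]

/-- the `j`-th element of `T`. -/
def idx (T : Tt m t) (j : Fin t) : Fin m := (T.1.orderIsoOfFin T.2 j : Fin m)

lemma idx_mem (T : Tt m t) (j : Fin t) : idx T j ∈ T.1 := (T.1.orderIsoOfFin T.2 j).2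

def rnk (T : Tt m t) (i : Fin m) (hi : i ∈ T.1) : Fin t :=
  (T.1.orderIsoOfFin T.2).symm ⟨i, hi⟩

lemma idx_rnk (T : Tt m t) (i : Fin m) (hi : i ∈ T.1) : idx T (rnk T i hi) = i := by
  rw [idx, rnk, OrderIso.apply_symm_apply]

lemma rnk_idx (T : Tt m t) (j : Fin t) (h : idx T j ∈ T.1) : rnk T (idx T j) h = j := by
  have : (⟨idx T j, h⟩ : {x // x ∈ T.1}) = T.1.orderIsoOfFin T.2 j := Subtype.ext rfl
  rw [rnk, this, OrderIso.symm_apply_apply]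

lemma idx_inj (T : Tt m t) {j j' : Fin t} (h : idx T j = idx T j') : j = j' := by
  have := (T.1.orderIsoOfFin T.2).injective (Subtype.ext h : T.1.orderIsoOfFin T.2 j = _)
  exact this

lemma idx_surj (T : Tt m t) (i : Fin m) (hi : i ∈ T.1) : ∃ j, idx T j = i :=
  ⟨rnk T i hi, idx_rnk T i hi⟩

/-- the non-star condition at a cell -/
def starFree (r : Row q z m t) (k : Col q m t) : Prop :=
  ∀ j : Fin t, k.2 j ∉ (r.1 (idx k.1 j)).1

instance (r : Row q z m t) (k : Col q m t) : Decidable (starFree r k) := by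
  unfold starFree; infer_instance

/-- the starred element of `B` at the `j`-th coordinate of `T` -/
def xElt (r : Row q z m t) (k : Col q m t) (j : Fin t) : Fin q :=
  elt (r.1 (idx k.1 j)).1 (r.1 (idx k.1 j)).2 (r.2 j)

lemma xElt_mem (r : Row q z m t) (k : Col q m t) (j : Fin t) :
    xElt r k j ∈ (r.1 (idx k.1 j)).1 := elt_mem _ _ _

/-- the first component of the symbol of a non-star cell -/
def CC (r : Row q z m t) (k : Col q m t) (h : starFree r k) (i : Fin m) : Sz q z :=
  if hi : i ∈ k.1.1 then
    ⟨insert (k.2 (rnk k.1 i hi)) ((r.1 i).1.erase (xElt r k (rnk k.1 i hi))),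
      by
        have h1 := xElt_mem r k (rnk k.1 i hi)
        have h2 := h (rnk k.1 i hi)
        rw [idx_rnk] at h1 h2
        rw [card_swap h1 h2]; exact (r.1 i).2⟩
  else r.1 i

lemma CC_idx (r : Row q z m t) (k : Col q m t) (h : starFree r k) (j : Fin t) :
    (CC r k h (idx k.1 j)).1
      = insert (k.2 j) ((r.1 (idx k.1 j)).1.erase (xElt r k j)) := by
  rw [CC, dif_pos (idx_mem k.1 j)]
  simp only [rnk_idx]

lemma CC_not_mem (r : Row q z m t) (k : Col q m t) (h : starFree r k) (i : Fin m)
    (hi : i ∉ k.1.1) : CC r k h i = r.1 i := dif_neg hi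

lemma xElt_ne (r : Row q z m t) (k : Col q m t) (h : starFree r k) (j : Fin t) :
    xElt r k j ≠ k.2 j := fun he => h j (he ▸ xElt_mem r k j)

lemma xElt_not_mem_CC (r : Row q z m t) (k : Col q m t) (h : starFree r k) (j : Fin t) :
    xElt r k j ∉ (CC r k h (idx k.1 j)).1 := by
  rw [CC_idx]
  simp only [Finset.mem_insert, Finset.mem_erase]
  rintro (h1 | ⟨h1, -⟩)
  · exact xElt_ne r k h j h1
  · exact h1 rfl

/-- the symbol at a non-star cell -/
def symOf (r : Row q z m t) (k : Col q m t) (h : starFree r k) : Sym q z m t :=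
  (CC r k h, fun j =>
    pos ((CC r k h (idx k.1 j)).1ᶜ) (compl_card _) (xElt r k j)
      (Finset.mem_compl.2 (xElt_not_mem_CC r k h j)))

def P0 (r : Row q z m t) (k : Col q m t) : Option (Sym q z m t) :=
  if h : starFree r k then some (symOf r k h) else none

lemma P0_eq_none_iff (r : Row q z m t) (k : Col q m t) :
    P0 r k = none ↔ ¬ starFree r k := by
  unfold P0; split <;> simp_all

/-- a symbol `s` is compatible with column `k` -/
def good (s : Sym q z m t) (k : Col q m t) : Prop :=
  ∀ j : Fin t, k.2 j ∈ (s.1 (idx k.1 j)).1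

/-- the replacement element of the symbol at the `j`-th coordinate of `T` -/
def yElt (s : Sym q z m t) (k : Col q m t) (j : Fin t) : Fin q :=
  elt ((s.1 (idx k.1 j)).1ᶜ) (compl_card _) (s.2 j)

lemma yElt_not_mem (s : Sym q z m t) (k : Col q m t) (j : Fin t) :
    yElt s k j ∉ (s.1 (idx k.1 j)).1 :=
  Finset.mem_compl.1 (elt_mem _ _ _)

/-- the row having symbol `s` in column `k` -/
def Bfun (s : Sym q z m t) (k : Col q m t) (h : good s k) (i : Fin m) : Sz q z :=
  if hi : i ∈ k.1.1 then
    ⟨insert (yElt s k (rnk k.1 i hi)) ((s.1 i).1.erase (k.2 (rnk k.1 i hi))),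
      by
        have h1 := h (rnk k.1 i hi)
        have h2 := yElt_not_mem s k (rnk k.1 i hi)
        rw [idx_rnk] at h1 h2
        rw [card_swap h1 h2]; exact (s.1 i).2⟩
  else s.1 i

lemma Bfun_idx (s : Sym q z m t) (k : Col q m t) (h : good s k) (j : Fin t) :
    (Bfun s k h (idx k.1 j)).1
      = insert (yElt s k j) ((s.1 (idx k.1 j)).1.erase (k.2 j)) := by
  rw [Bfun, dif_pos (idx_mem k.1 j)]
  simp only [rnk_idx]

lemma Bfun_not_mem (s : Sym q z m t) (k : Col q m t) (h : good s k) (i : Fin m)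
    (hi : i ∉ k.1.1) : Bfun s k h i = s.1 i := dif_neg hi

lemma yElt_mem_Bfun (s : Sym q z m t) (k : Col q m t) (h : good s k) (j : Fin t) :
    yElt s k j ∈ (Bfun s k h (idx k.1 j)).1 := by
  rw [Bfun_idx]; exact Finset.mem_insert_self _ _

def rowOf (s : Sym q z m t) (k : Col q m t) (h : good s k) : Row q z m t :=
  (Bfun s k h, fun j =>
    pos (Bfun s k h (idx k.1 j)).1 (Bfun s k h (idx k.1 j)).2 (yElt s k j)
      (yElt_mem_Bfun s k h j))

lemma rowOf_congr (s : Sym q z m t) (k k' : Col q m t) (h : good s k) (h' : good s k')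
    (hk : k = k') : rowOf s k h = rowOf s k' h' := by subst hk; rfl

lemma starFree_rowOf (s : Sym q z m t) (k : Col q m t) (h : good s k) :
    starFree (rowOf s k h) k := by
  intro j
  show k.2 j ∉ (Bfun s k h (idx k.1 j)).1
  rw [Bfun_idx]
  simp only [Finset.mem_insert, Finset.mem_erase]
  rintro (h1 | ⟨h1, -⟩)
  · exact yElt_not_mem s k j (h1 ▸ h j)
  · exact h1 rfl

lemma xElt_rowOf (s : Sym q z m t) (k : Col q m t) (h : good s k) (j : Fin t) :
    xElt (rowOf s k h) k j = yElt s k j := by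
  rw [xElt]
  exact elt_pos _ _ _ _

/-- Key lemma A : the constructed row has symbol `s` in column `k`. -/
lemma P0_rowOf (s : Sym q z m t) (k : Col q m t) (h : good s k) :
    P0 (rowOf s k h) k = some s := by
  rw [P0, dif_pos (starFree_rowOf s k h)]
  congr 1
  have hCC : CC (rowOf s k h) k (starFree_rowOf s k h) = s.1 := by
    funext i
    by_cases hi : i ∈ k.1.1
    · obtain ⟨j, rfl⟩ := idx_surj k.1 i hi
      apply Subtype.ext
      rw [CC_idx, xElt_rowOf]
      show insert (k.2 j) ((Bfun s k h (idx k.1 j)).1.erase (yElt s k j)) = _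
      rw [Bfun_idx]
      exact swap_swap (h j) (yElt_not_mem s k j)
    · rw [CC_not_mem _ _ _ _ hi]
      exact dif_neg hi
  refine Prod.ext hCC (funext fun j => ?_)
  show pos _ _ _ _ = s.2 j
  have : pos ((CC (rowOf s k h) k (starFree_rowOf s k h) (idx k.1 j)).1ᶜ) (compl_card _)
      (xElt (rowOf s k h) k j) (Finset.mem_compl.2 (xElt_not_mem_CC _ _ _ j))
      = pos ((s.1 (idx k.1 j)).1ᶜ) (compl_card _) (yElt s k j)
        (elt_mem _ _ _) := by
    apply pos_congr
    · rw [hCC]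
    · exact xElt_rowOf s k h j
  rw [this]
  exact pos_elt _ _ _ _

lemma good_symOf (r : Row q z m t) (k : Col q m t) (h : starFree r k) :
    good (symOf r k h) k := by
  intro j
  show k.2 j ∈ (CC r k h (idx k.1 j)).1
  rw [CC_idx]
  exact Finset.mem_insert_self _ _

lemma yElt_symOf (r : Row q z m t) (k : Col q m t) (h : starFree r k) (j : Fin t) :
    yElt (symOf r k h) k j = xElt r k j := by
  rw [yElt]
  exact elt_pos _ _ _ _

/-- Key lemma B : any row carrying symbol `symOf r k h` in column `k` is `r`. -/
lemma rowOf_symOf (r : Row q z m t) (k : Col q m t) (h : starFree r k) :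
    rowOf (symOf r k h) k (good_symOf r k h) = r := by
  have hB : Bfun (symOf r k h) k (good_symOf r k h) = r.1 := by
    funext i
    by_cases hi : i ∈ k.1.1
    · obtain ⟨j, rfl⟩ := idx_surj k.1 i hi
      apply Subtype.ext
      rw [Bfun_idx, yElt_symOf]
      show insert (xElt r k j) ((CC r k h (idx k.1 j)).1.erase (k.2 j)) = _
      rw [CC_idx]
      exact swap_swap (xElt_mem r k j) (h j)
    · rw [Bfun_not_mem _ _ _ _ hi]
      exact dif_neg hi
  refine Prod.ext hB (funext fun j => ?_)
  show pos _ _ _ _ = r.2 j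
  have : pos (Bfun (symOf r k h) k (good_symOf r k h) (idx k.1 j)).1
      (Bfun (symOf r k h) k (good_symOf r k h) (idx k.1 j)).2
      (yElt (symOf r k h) k j) (yElt_mem_Bfun _ _ _ j)
      = pos (r.1 (idx k.1 j)).1 (r.1 (idx k.1 j)).2 (xElt r k j) (xElt_mem r k j) := by
    apply pos_congr
    · rw [hB]
    · exact yElt_symOf r k h j
  rw [this]
  exact pos_elt _ _ _ _

lemma P0_eq_some (r : Row q z m t) (k : Col q m t) (s : Sym q z m t)
    (hs : P0 r k = some s) :
    ∃ h : good s k, r = rowOf s k h := by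
  rw [P0] at hs
  split at hs
  · rename_i h
    obtain rfl : symOf r k h = s := Option.some_injective _ hs
    exact ⟨good_symOf r k h, (rowOf_symOf r k h).symm⟩
  · exact absurd hs (by simp)

/-- C3 for `P0`. -/
lemma P0_cross (r1 r2 : Row q z m t) (k1 k2 : Col q m t) (s : Sym q z m t)
    (hne : (r1, k1) ≠ (r2, k2)) (h1 : P0 r1 k1 = some s) (h2 : P0 r2 k2 = some s) :
    P0 r1 k2 = none := by
  obtain ⟨g1, rfl⟩ := P0_eq_some r1 k1 s h1
  obtain ⟨g2, rfl⟩ := P0_eq_some r2 k2 s h2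
  have hk : k1 ≠ k2 := by
    rintro rfl
    exact hne (by rw [rowOf_congr s k1 k1 g1 g2 rfl])
  rw [P0_eq_none_iff]
  intro hsf
  by_cases hT : k1.1 = k2.1
  · have hb : k1.2 ≠ k2.2 := fun hb => hk (Prod.ext hT hb)
    obtain ⟨j, hj⟩ := Function.ne_iff.1 hb
    refine hsf j ?_
    have hidx : idx k2.1 j = idx k1.1 j := by rw [hT]
    show k2.2 j ∈ (Bfun s k1 g1 (idx k2.1 j)).1
    rw [hidx, Bfun_idx]
    refine Finset.mem_insert_of_mem (Finset.mem_erase.2 ⟨Ne.symm hj, ?_⟩)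
    rw [← hidx]
    exact g2 j
  · have hns : ¬ k2.1.1 ⊆ k1.1.1 := by
      intro hsub
      exact hT (Subtype.ext
        (Finset.eq_of_subset_of_card_le hsub (by rw [k1.1.2, k2.1.2])).symm)
    obtain ⟨i, hi2, hi1⟩ := Finset.not_subset.1 hns
    obtain ⟨j, rfl⟩ := idx_surj k2.1 i hi2
    refine hsf j ?_
    show k2.2 j ∈ (Bfun s k1 g1 (idx k2.1 j)).1
    rw [Bfun_not_mem s k1 g1 _ hi1]
    exact g2 j

lemma P0_good (r : Row q z m t) (k : Col q m t) (s : Sym q z m t)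
    (hs : P0 r k = some s) : good s k := by
  obtain ⟨h, -⟩ := P0_eq_some r k s hs; exact h

lemma P0_row (r : Row q z m t) (k : Col q m t) (s : Sym q z m t)
    (hs : P0 r k = some s) : r = rowOf s k (P0_good r k s hs) := by
  obtain ⟨h, hr⟩ := P0_eq_some r k s hs; exact hr

/-- the column associated to a pair (T, g). -/
def toCol (s : Sym q z m t) (Tg : Tt m t × (Fin t → Fin z)) : Col q m t :=
  (Tg.1, fun j => elt (s.1 (idx Tg.1 j)).1 (s.1 (idx Tg.1 j)).2 (Tg.2 j))

lemma good_toCol (s : Sym q z m t) (Tg : Tt m t × (Fin t → Fin z)) :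
    good s (toCol s Tg) := fun j => elt_mem (s.1 (idx Tg.1 j)).1 (s.1 (idx Tg.1 j)).2 (Tg.2 j)

/-- regularity count for `P0`. -/
lemma card_fiber (s : Sym q z m t) :
    (Finset.univ.filter fun rk : Row q z m t × Col q m t =>
      P0 rk.1 rk.2 = some s).card = m.choose t * z ^ t := by
  have key : (Finset.univ.filter fun rk : Row q z m t × Col q m t =>
      P0 rk.1 rk.2 = some s).card
      = (Finset.univ : Finset (Tt m t × (Fin t → Fin z))).card := by
    refine Finset.card_bij'
      (fun rk hrk =>
        (rk.2.1, fun j => pos (s.1 (idx rk.2.1 j)).1 (s.1 (idx rk.2.1 j)).2 (rk.2.2 j)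
          (P0_good rk.1 rk.2 s (Finset.mem_filter.1 hrk).2 j)))
      (fun Tg _ => (rowOf s (toCol s Tg) (good_toCol s Tg), toCol s Tg))
      (fun a ha => Finset.mem_univ _) ?_ ?_ ?_
    · intro Tg _
      rw [Finset.mem_filter]
      exact ⟨Finset.mem_univ _, P0_rowOf _ _ _⟩
    · intro rk hrk
      have hcol : toCol s (rk.2.1, fun j =>
          pos (s.1 (idx rk.2.1 j)).1 (s.1 (idx rk.2.1 j)).2 (rk.2.2 j)
            (P0_good rk.1 rk.2 s (Finset.mem_filter.1 hrk).2 j)) = rk.2 := by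
        refine Prod.ext rfl (funext fun j => ?_)
        exact elt_pos _ _ _ _
      refine Prod.ext ?_ hcol
      show rowOf s _ _ = rk.1
      rw [rowOf_congr s _ rk.2 _ (P0_good rk.1 rk.2 s (Finset.mem_filter.1 hrk).2) hcol]
      exact (P0_row rk.1 rk.2 s (Finset.mem_filter.1 hrk).2).symm
    · intro Tg _
      refine Prod.ext rfl (funext fun j => ?_)
      exact pos_elt _ _ _ _
  rw [key]
  simp [Finset.card_univ, Fintype.card_finset_len]

def prodFstEquiv {α β : Type*} (p : α → Prop) : {x : α × β // p x.1} ≃ {a : α // p a} × β where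
  toFun x := (⟨x.1.1, x.2⟩, x.1.2)
  invFun y := ⟨(y.1.1, y.2), y.1.2⟩
  left_inv x := rfl
  right_inv y := rfl

lemma card_Sz : Fintype.card (Sz q z) = q.choose z := by
  simp [Fintype.card_finset_len]

lemma card_avoid (x : Fin q) :
    Fintype.card {A : Sz q z // x ∉ A.1} = (q - 1).choose z := by
  have e : {A : Sz q z // x ∉ A.1}
      ≃ {A : Finset (Fin q) // A ∈ ({x}ᶜ : Finset (Fin q)).powersetCard z} :=
    { toFun := fun A => ⟨A.1.1, by
        rw [Finset.mem_powersetCard]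
        exact ⟨Finset.subset_compl_singleton.2 A.2, A.1.2⟩⟩
      invFun := fun A => ⟨⟨A.1, (Finset.mem_powersetCard.1 A.2).2⟩,
        Finset.subset_compl_singleton.1 (Finset.mem_powersetCard.1 A.2).1⟩
      left_inv := fun A => rfl
      right_inv := fun A => rfl }
  rw [Fintype.card_congr e, Fintype.card_coe, Finset.card_powersetCard]
  congr 1
  rw [Finset.card_compl, Finset.card_singleton, Fintype.card_fin]

lemma card_nonstar (k : Col q m t) :
    (Finset.univ.filter fun r : Row q z m t => starFree r k).card
      = (q - 1).choose z ^ t * q.choose z ^ (m - t) * z ^ t := by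
  rw [← Fintype.card_subtype]
  show Fintype.card {r : Row q z m t // ∀ j : Fin t, k.2 j ∉ (r.1 (idx k.1 j)).1} = _
  rw [Fintype.card_congr (prodFstEquiv (fun B : Fin m → Sz q z =>
    ∀ j : Fin t, k.2 j ∉ (B (idx k.1 j)).1))]
  rw [Fintype.card_prod, Fintype.card_fun, Fintype.card_fin, Fintype.card_fin]
  congr 1
  rw [Fintype.card_congr (Equiv.subtypeEquivRight (q := fun B : Fin m → Sz q z =>
    ∀ i : Fin m, ∀ j : Fin t, idx k.1 j = i → k.2 j ∉ (B i).1)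
    (fun B => ⟨fun h i j hj => by subst hj; exact h j, fun h j => h _ j rfl⟩))]
  rw [Fintype.card_congr (Equiv.subtypePiEquivPi (p := fun (i : Fin m) (A : Sz q z) =>
    ∀ j : Fin t, idx k.1 j = i → k.2 j ∉ A.1))]
  rw [Fintype.card_pi]
  have hcard : ∀ i : Fin m,
      Fintype.card {A : Sz q z // ∀ j : Fin t, idx k.1 j = i → k.2 j ∉ A.1}
        = if i ∈ k.1.1 then (q - 1).choose z else q.choose z := by
    intro i
    by_cases hi : i ∈ k.1.1
    · rw [if_pos hi]
      obtain ⟨j0, rfl⟩ := idx_surj k.1 i hi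
      rw [Fintype.card_congr (Equiv.subtypeEquivRight (q := fun A : Sz q z =>
        k.2 j0 ∉ A.1) (fun A => ⟨fun h => h j0 rfl,
          fun h j hj => by rwa [idx_inj k.1 hj]⟩))]
      exact card_avoid _
    · rw [if_neg hi]
      rw [Fintype.card_congr (Equiv.subtypeUnivEquiv (fun A j hj => by
        subst hj; exact absurd (idx_mem k.1 j) hi))]
      exact card_Sz
  rw [Finset.prod_congr rfl fun i _ => hcard i]
  rw [← Finset.prod_mul_prod_compl k.1.1]
  rw [Finset.prod_congr rfl fun i hi => if_pos hi,
    Finset.prod_congr rfl fun i hi => if_neg (Finset.mem_compl.1 hi),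
    Finset.prod_const, Finset.prod_const, k.1.2, Finset.card_compl, k.1.2,
    Fintype.card_fin]

lemma card_star (k : Col q m t) :
    (Finset.univ.filter fun r : Row q z m t => P0 r k = none).card
      = q.choose z ^ m * z ^ t - (q - 1).choose z ^ t * q.choose z ^ (m - t) * z ^ t := by
  have h1 : (Finset.univ.filter fun r : Row q z m t => P0 r k = none)
      = Finset.univ \ (Finset.univ.filter fun r : Row q z m t => starFree r k) := by
    ext r
    simp [P0_eq_none_iff]
  rw [h1, Finset.card_sdiff_of_subset (Finset.filter_subset _ _), card_nonstar, Finset.card_univ]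
  congr 1
  simp [Fintype.card_prod, Fintype.card_fun, card_Sz, Fintype.card_fin]

lemma choose_key (hz : 0 < z) (hzq : z < q) :
    (q - z) * q.choose z = q * (q - 1).choose z := by
  have h1 := Nat.add_one_mul_choose_eq (q - 1) (z - 1)
  rw [show q - 1 + 1 = q by omega, show z - 1 + 1 = z by omega] at h1
  have h2 := Nat.choose_succ_succ' (q - 1) (z - 1)
  rw [show q - 1 + 1 = q by omega, show z - 1 + 1 = z by omega] at h2
  have h3 : z * ((q - 1).choose (z - 1) + (q - 1).choose z) = q * (q - 1).choose (z - 1) := by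
    rw [← h2, mul_comm]
    exact h1.symm
  rw [h2, Nat.sub_mul, h3, Nat.mul_add, Nat.add_sub_cancel_left]

lemma E_le (htm : t ≤ m) :
    (q - 1).choose z ^ t * q.choose z ^ (m - t) * z ^ t ≤ q.choose z ^ m * z ^ t := by
  apply Nat.mul_le_mul_right
  calc (q - 1).choose z ^ t * q.choose z ^ (m - t)
      ≤ q.choose z ^ t * q.choose z ^ (m - t) :=
        Nat.mul_le_mul_right _ (Nat.pow_le_pow_left (Nat.choose_le_choose z (by omega)) t)
    _ = q.choose z ^ m := by rw [← pow_add]; congr 1; omega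

lemma Z_cast (hz : 0 < z) (hzq : z < q) (htm : t ≤ m) :
    ((q.choose z ^ m * z ^ t - (q - 1).choose z ^ t * q.choose z ^ (m - t) * z ^ t : ℕ) : ℚ)
      = ((z ^ t * q.choose z ^ m : ℕ) : ℚ) * (1 - (((q : ℚ) - (z : ℚ)) / (q : ℚ)) ^ t) := by
  have hq : (q : ℚ) ≠ 0 := Nat.cast_ne_zero.2 (by omega)
  have hkey : ((q : ℚ) - z) * (q.choose z : ℚ) = (q : ℚ) * ((q - 1).choose z : ℚ) := by
    have h := choose_key hz hzq
    have h' := congrArg (fun n : ℕ => (n : ℚ)) h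
    push_cast [Nat.cast_sub hzq.le] at h'
    exact h'
  have hkey2 : ((q : ℚ) - z) ^ t * (q.choose z : ℚ) ^ t
      = (q : ℚ) ^ t * ((q - 1).choose z : ℚ) ^ t := by
    rw [← mul_pow, ← mul_pow, hkey]
  have hcm : ((q.choose z : ℚ)) ^ m = (q.choose z : ℚ) ^ t * (q.choose z : ℚ) ^ (m - t) := by
    rw [← pow_add]; congr 1; omega
  rw [Nat.cast_sub (E_le htm)]
  push_cast
  rw [hcm, div_pow]
  field_simp
  linear_combination ((q.choose z : ℚ) ^ (m - t)) * hkey2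

end SchemeA

/-- Scheme A: for positive integers z < q and t ≤ m there is a
    C(m,t)z^t-regular PDA with parameters
    (C(m,t)q^t, z^tC(q,z)^m, z^tC(q,z)^m(1−((q−z)/q)^t), (q−z)^tC(q,z)^m). -/
theorem scheme_A (q z m t : ℕ) (hz : 0 < z) (hzq : z < q)
    (ht : 0 < t) (htm : t ≤ m) :
    ∃ Z : ℕ,
      (Z : ℚ) = (z ^ t * (Nat.choose q z) ^ m : ℕ) *
        (1 - (((q : ℚ) - (z : ℚ)) / (q : ℚ)) ^ t) ∧
      ∃ P : Fin (z ^ t * (Nat.choose q z) ^ m) →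
          Fin (Nat.choose m t * q ^ t) →
          Option (Fin ((q - z) ^ t * (Nat.choose q z) ^ m)),
        IsPDA Z P ∧ PDARegular (Nat.choose m t * z ^ t) P := by
  classical
  have hRow : Fintype.card (SchemeA.Row q z m t) = z ^ t * q.choose z ^ m := by
    simp [Fintype.card_fun, Fintype.card_finset_len]
    ring
  have hCol : Fintype.card (SchemeA.Col q m t) = m.choose t * q ^ t := by
    simp [Fintype.card_fun, Fintype.card_finset_len]
  have hSym : Fintype.card (SchemeA.Sym q z m t) = (q - z) ^ t * q.choose z ^ m := by
    simp [Fintype.card_fun, Fintype.card_finset_len]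
    ring
  let eR : Fin (z ^ t * q.choose z ^ m) ≃ SchemeA.Row q z m t :=
    (Fintype.equivFinOfCardEq hRow).symm
  let eK : Fin (m.choose t * q ^ t) ≃ SchemeA.Col q m t :=
    (Fintype.equivFinOfCardEq hCol).symm
  let eS : Fin ((q - z) ^ t * q.choose z ^ m) ≃ SchemeA.Sym q z m t :=
    (Fintype.equivFinOfCardEq hSym).symm
  have hnone : ∀ o : Option (SchemeA.Sym q z m t),
      o.map eS.symm = none ↔ o = none := fun o => by cases o <;> simp
  have hsome : ∀ (o : Option (SchemeA.Sym q z m t)) (s : Fin ((q - z) ^ t * q.choose z ^ m)),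
      o.map eS.symm = some s ↔ o = some (eS s) := fun o s => by
    cases o <;> simp [Equiv.symm_apply_eq]
  refine ⟨q.choose z ^ m * z ^ t - (q - 1).choose z ^ t * q.choose z ^ (m - t) * z ^ t,
    SchemeA.Z_cast hz hzq htm,
    fun j k => (SchemeA.P0 (eR j) (eK k)).map eS.symm, ⟨?_, ?_, ?_⟩, ?_⟩
  · -- C1
    intro k
    have he : (Finset.univ.filter fun j : Fin (z ^ t * q.choose z ^ m) =>
        (SchemeA.P0 (eR j) (eK k)).map eS.symm = none).card
        = (Finset.univ.filter fun r : SchemeA.Row q z m t =>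
            SchemeA.P0 r (eK k) = none).card :=
      Finset.card_equiv eR (fun j => by simp [hnone])
    rw [he, SchemeA.card_star]
  · -- C2
    intro s
    have hpos : 0 < (Finset.univ.filter
        fun rk : SchemeA.Row q z m t × SchemeA.Col q m t =>
          SchemeA.P0 rk.1 rk.2 = some (eS s)).card := by
      rw [SchemeA.card_fiber]
      exact Nat.mul_pos (Nat.choose_pos htm) (pow_pos hz t)
    obtain ⟨rk, hrk⟩ := Finset.card_pos.1 hpos
    have hP := (Finset.mem_filter.1 hrk).2
    exact ⟨eR.symm rk.1, eK.symm rk.2, by simp [hP]⟩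
  · -- C3
    intro j1 j2 k1 k2 s hne h1 h2
    rw [hsome] at h1 h2
    have hne' : ((eR j1), (eK k1)) ≠ ((eR j2), (eK k2)) := by
      intro h
      apply hne
      rw [Prod.ext_iff] at h ⊢
      exact ⟨eR.injective h.1, eK.injective h.2⟩
    constructor
    · rw [hnone]
      exact SchemeA.P0_cross _ _ _ _ _ hne' h1 h2
    · rw [hnone]
      exact SchemeA.P0_cross _ _ _ _ _ (Ne.symm hne') h2 h1
  · -- regularity
    intro s
    have he : (Finset.univ.filter fun jk : Fin (z ^ t * q.choose z ^ m) ×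
        Fin (m.choose t * q ^ t) =>
        (SchemeA.P0 (eR jk.1) (eK jk.2)).map eS.symm = some s).card
        = (Finset.univ.filter fun rk : SchemeA.Row q z m t × SchemeA.Col q m t =>
            SchemeA.P0 rk.1 rk.2 = some (eS s)).card :=
      Finset.card_equiv (eR.prodCongr eK) (fun jk => by simp [hsome, Equiv.prodCongr])
    rw [he, SchemeA.card_fiber]
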